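/- Let N = (0,...,0,1) ∈ S^d, and for x ∈ S^d \ {N, -N} let γ_x(t) = ((sin t/√(1-x_d²))·x₀, ..., (sin t/√(1-x_d²))·x_{d-1}, cos t) for t ∈ [0, π] be the great semicircle from N to -N through x. If x, y ∈ S^d \ {N, -N} with ‖x - y‖ ≤ δ, and y' is the point on γ_y whose last coordinate equals x_d, then ‖x - y'‖ ≤ 2δ. -/

import Mathlib

lemma normsq_aux {n : ℕ} (u : EuclideanSpace ℝ (Fin n)) : ‖u‖ ^ 2 = ∑ i, u i ^ 2 := by
  rw [EuclideanSpace.norm_eq, Real.sq_sqrt (by positivity)]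
  simp [Real.norm_eq_abs, sq_abs]

set_option maxHeartbeats 2000000 in
/-- Let `N` be the north pole of `S^d` and, for `y` distinct from `±N`, let
`γ_y` be the great semicircle from `N` to `-N` through `y`. If `x, y ∈ S^d`
are distinct from `±N`, `‖x - y‖ ≤ δ`, and `y'` is the point of `γ_y` whose
last coordinate equals that of `x` (explicitly `y'_i = (√(1-x_d²)/√(1-y_d²))·y_i`
for `i < d` and `y'_d = x_d`), then `‖x - y'‖ ≤ 2δ`. -/
theorem stmt_15 (d : ℕ) (δ : ℝ)
    (x y y' : EuclideanSpace ℝ (Fin (d + 1)))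
    (hx : ‖x‖ = 1) (hy : ‖y‖ = 1)
    (hxp : |x (Fin.last d)| ≠ 1) (hyp : |y (Fin.last d)| ≠ 1)
    (hxy : ‖x - y‖ ≤ δ)
    (hy' : ∀ i : Fin (d + 1), y' i =
      if i = Fin.last d then x (Fin.last d)
      else Real.sqrt (1 - x (Fin.last d) ^ 2) /
        Real.sqrt (1 - y (Fin.last d) ^ 2) * y i) :
    ‖x - y'‖ ≤ 2 * δ := by
  set a := x (Fin.last d) with ha
  set b := y (Fin.last d) with hb
  set A := Real.sqrt (1 - a ^ 2) with hA
  set B := Real.sqrt (1 - b ^ 2) with hB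
  set u : EuclideanSpace ℝ (Fin (d + 1)) :=
    WithLp.toLp 2 (fun i => if i = Fin.last d then 0 else x i) with hu
  set v : EuclideanSpace ℝ (Fin (d + 1)) :=
    WithLp.toLp 2 (fun i => if i = Fin.last d then 0 else y i) with hv
  have huap : ∀ i, u i = if i = Fin.last d then 0 else x i := fun i => rfl
  have hvap : ∀ i, v i = if i = Fin.last d then 0 else y i := fun i => rfl
  have hne : ∀ i : Fin d, (i.castSucc : Fin (d + 1)) ≠ Fin.last d :=
    fun i => (Fin.castSucc_lt_last i).ne
  -- |b| < 1
  have hbabs : |b| ≤ 1 := by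
    have := EuclideanSpace.norm_eq y
    have h1 : b ^ 2 ≤ ∑ i, ‖y i‖ ^ 2 := by
      have := Finset.single_le_sum (f := fun i => ‖y i‖ ^ 2)
        (fun i _ => by positivity) (Finset.mem_univ (Fin.last d))
      simpa [Real.norm_eq_abs, sq_abs] using this
    nlinarith [Real.sq_sqrt (show (0:ℝ) ≤ ∑ i, ‖y i‖ ^ 2 by positivity),
      abs_nonneg b, sq_abs b, hy ▸ this]
  have hb2 : b ^ 2 < 1 := by
    rcases lt_or_eq_of_le hbabs with h | h
    · nlinarith [sq_abs b, abs_nonneg b]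
    · exact absurd h hyp
  have hBpos : 0 < B := Real.sqrt_pos.mpr (by linarith)
  -- squared norms
  have hnx : ‖x‖ ^ 2 = ∑ i, x i ^ 2 := normsq_aux x
  have hny : ‖y‖ ^ 2 = ∑ i, y i ^ 2 := normsq_aux y
  have hsplit : ∀ w : EuclideanSpace ℝ (Fin (d + 1)),
      ∑ i, w i ^ 2 = (∑ i : Fin d, w i.castSucc ^ 2) + w (Fin.last d) ^ 2 :=
    fun w => Fin.sum_univ_castSucc (f := fun i => w i ^ 2)
  have hnu : ‖u‖ ^ 2 = 1 - a ^ 2 := by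
    rw [normsq_aux u, hsplit u]
    have : (∑ i : Fin d, u i.castSucc ^ 2) = ∑ i : Fin d, x i.castSucc ^ 2 := by
      apply Finset.sum_congr rfl; intro i _; simp [huap, hne i]
    rw [this]
    simp only [huap, if_pos]
    have := hx ▸ hnx
    rw [hsplit x] at this
    simp only [← ha] at this ⊢
    nlinarith [this]
  have hnv : ‖v‖ ^ 2 = 1 - b ^ 2 := by
    rw [normsq_aux v, hsplit v]
    have : (∑ i : Fin d, v i.castSucc ^ 2) = ∑ i : Fin d, y i.castSucc ^ 2 := by
      apply Finset.sum_congr rfl; intro i _; simp [hvap, hne i]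
    rw [this]
    simp only [hvap, if_pos]
    have := hy ▸ hny
    rw [hsplit y] at this
    simp only [← hb] at this ⊢
    nlinarith [this]
  have hAU : A = ‖u‖ := by
    rw [hA, ← hnu, Real.sqrt_sq (norm_nonneg u)]
  have hBV : B = ‖v‖ := by
    rw [hB, ← hnv, Real.sqrt_sq (norm_nonneg v)]
  -- ‖u - v‖ ≤ ‖x - y‖
  have huv : ‖u - v‖ ≤ ‖x - y‖ := by
    have h1 : ‖u - v‖ ^ 2 ≤ ‖x - y‖ ^ 2 := by
      rw [normsq_aux (u - v), normsq_aux (x - y), hsplit (u - v), hsplit (x - y)]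
      have e1 : (∑ i : Fin d, (u - v) i.castSucc ^ 2) =
          ∑ i : Fin d, (x - y) i.castSucc ^ 2 := by
        apply Finset.sum_congr rfl; intro i _
        simp [huap, hvap, hne i, PiLp.sub_apply]
      rw [e1]
      have e2 : (u - v) (Fin.last d) = 0 := by simp [huap, hvap, PiLp.sub_apply]
      rw [e2]
      nlinarith [sq_nonneg ((x - y) (Fin.last d))]
    nlinarith [norm_nonneg (u - v), norm_nonneg (x - y)]
  -- x - y' = u - (A/B) • v
  have hid : x - y' = u - (A / B) • v := by
    ext i
    rw [PiLp.sub_apply, PiLp.sub_apply, PiLp.smul_apply, hy' i]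
    by_cases h : i = Fin.last d
    · simp [h, huap, hvap]; rw [← ha]; ring
    · simp [h, huap, hvap, smul_eq_mul]
  -- triangle
  have h1 : ‖u - (A / B) • v‖ ≤ ‖u - v‖ + ‖v - (A / B) • v‖ := by
    have : u - (A / B) • v = (u - v) + (v - (A / B) • v) := by abel
    rw [this]; exact norm_add_le _ _
  have h2 : ‖v - (A / B) • v‖ = |B - A| := by
    have : v - (A / B) • v = (1 - A / B) • v := by
      rw [sub_smul, one_smul]
    rw [this, norm_smul, Real.norm_eq_abs, ← hBV]
    rw [show (1 - A / B) = (B - A) / B by field_simp]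
    rw [abs_div, abs_of_pos hBpos]
    field_simp
  have h3 : |B - A| ≤ ‖u - v‖ := by
    rw [hAU, hBV]
    simpa [abs_sub_comm] using abs_norm_sub_norm_le u v
  calc ‖x - y'‖ = ‖u - (A / B) • v‖ := by rw [hid]
    _ ≤ ‖u - v‖ + |B - A| := by rw [← h2]; exact h1
    _ ≤ ‖u - v‖ + ‖u - v‖ := by linarith
    _ ≤ 2 * δ := by linarith [le_trans huv hxy]
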